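/- Let M^n be a hypersurface of a manifold M̃^{n+1} with metallic structure J (J² = pJ + qI), with unit normal ν, and suppose the decompositions JX = φX + η(X)ν for tangent X, Jν = qξ + pν, and Jξ = ν hold, where ξ is tangent, η(ξ) = 1, η∘φ = 0. Then φ²X = pφX + q(X − η(X)ξ) for all tangent X, so (φ,η,ξ) is an almost quadratic φ-structure on M^n. -/
import Mathlib

/-- Let `M^n` be a hypersurface (tangent bundle modeled by `V`, included in
the ambient tangent bundle `W` via the injective map `i`, with unit normal `ν ∉ i(V)`)
of a manifold `M̃^{n+1}` with metallic structure `J` (`J² = pJ + qI`). If the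
decompositions `J(iX) = i(φX) + η(X)ν`, `Jν = q·iξ + pν`, `J(iξ) = ν` hold with `ξ`
tangent, `η(ξ) = 1`, `η∘φ = 0`, then `φ²X = pφX + q(X − η(X)ξ)` for all tangent `X`,
i.e. `(φ,η,ξ)` is an almost quadratic φ-structure on `M^n`. -/
theorem hypersurface_quadratic_structure
    {V W : Type*} [AddCommGroup V] [Module ℝ V] [AddCommGroup W] [Module ℝ W]
    (i : V →ₗ[ℝ] W) (hi : Function.Injective i)
    (J : W →ₗ[ℝ] W) (p q : ℕ) (hp : 0 < p) (hq : 0 < q)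
    (hJ : ∀ w, J (J w) = (p : ℝ) • J w + (q : ℝ) • w)
    (ν : W) (hν : ν ∉ LinearMap.range i)
    (φ : V →ₗ[ℝ] V) (η : V →ₗ[ℝ] ℝ) (ξ : V)
    (hdec : ∀ X, J (i X) = i (φ X) + η X • ν)
    (hJν : J ν = (q : ℝ) • i ξ + (p : ℝ) • ν)
    (hJξ : J (i ξ) = ν)
    (hηξ : η ξ = 1) (hηφ : ∀ X, η (φ X) = 0) :
    ∀ X, φ (φ X) = (p : ℝ) • φ X + (q : ℝ) • (X - η X • ξ) := by
  intro X
  have h1 : J (J (i X)) = i (φ (φ X)) + (q : ℝ) • η X • i ξ + (p : ℝ) • η X • ν := by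
    rw [hdec, map_add, hdec, map_smul, hJν, hηφ]
    simp [smul_add, smul_smul, mul_comm]
    ring_nf
    module
  have h2 : J (J (i X)) = (p : ℝ) • i (φ X) + (p : ℝ) • η X • ν + (q : ℝ) • i X := by
    rw [hJ, hdec]; module
  apply hi
  have := h1.symm.trans h2
  have h3 : i (φ (φ X)) = (p : ℝ) • i (φ X) + (q : ℝ) • i X - (q : ℝ) • η X • i ξ := by
    linear_combination (norm := module) this
  simp only [map_add, map_smul, map_sub, h3]
  module
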